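/- Let X be a finite pure simplicial complex of dimension at least 2, let G be a group acting on a finite nonempty set S, and let φ ∈ C¹(X;G). Then m_f(Y_φ) ≤ ‖d₁φ‖, where f:Y_φ→X is the projection map. -/

import Mathlib

open Finset

variable {V : Type*} [DecidableEq V]

/-- A finite abstract simplicial complex on vertex type `V`. -/
structure SComplex (V : Type*) [DecidableEq V] where
  faces : Finset (Finset V)
  nonempty_of_mem : ∀ σ ∈ faces, σ.Nonempty
  down_closed : ∀ σ ∈ faces, ∀ τ ⊆ σ, τ.Nonempty → τ ∈ faces

namespace SComplex

/-- The set `X(k)` of `k`-dimensional simplices (cardinality `k+1`). -/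
def simps (X : SComplex V) (k : ℕ) : Finset (Finset V) :=
  X.faces.filter fun σ => σ.card = k + 1

/-- The number of vertices of a top-dimensional face. -/
def rank (X : SComplex V) : ℕ := X.faces.sup Finset.card

/-- The weight `c_X(σ)`. -/
noncomputable def weight (X : SComplex V) (σ : Finset V) : ℝ :=
  (((X.simps (X.rank - 1)).filter fun τ => σ ⊆ τ).card : ℝ) /
    ((X.rank.choose σ.card) * ((X.simps (X.rank - 1)).card))

/-- `X` is pure of dimension `n-1` : every face is contained in a face with `n` vertices. -/
def IsPureOfRank (X : SComplex V) (n : ℕ) : Prop :=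
  X.faces.Nonempty ∧ ∀ σ ∈ X.faces, ∃ τ ∈ X.faces, σ ⊆ τ ∧ τ.card = n

/-- The link `lk(X,σ)`. -/
def lk (X : SComplex V) (σ : Finset V) : SComplex V where
  faces := X.faces.filter fun η => η ∪ σ ∈ X.faces ∧ Disjoint η σ
  nonempty_of_mem := fun η hη => X.nonempty_of_mem η (mem_filter.mp hη).1
  down_closed := by
    intro η hη τ hτη hτ
    rw [mem_filter] at hη ⊢
    refine ⟨X.down_closed η hη.1 τ hτη hτ,
      X.down_closed (η ∪ σ) hη.2.1 (τ ∪ σ) (union_subset_union_left hτη) ?_,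
      hη.2.2.mono_left hτη⟩
    exact hτ.mono subset_union_left

/-- The star `st(X,σ)`. -/
def star (X : SComplex V) (σ : Finset V) : Finset (Finset V) :=
  X.faces.filter fun τ => τ ∪ σ ∈ X.faces

/-- The vertices of `X`. -/
def verts (X : SComplex V) [Fintype V] : Finset V :=
  Finset.univ.filter fun v => ({v} : Finset V) ∈ X.faces

end SComplex
section Cochains

variable {G : Type*} [Group G]

/-- `φ ∈ C¹(X;G)`: an antisymmetric `G`-valued function on ordered pairs. -/
def IsCochain (G : Type*) [Group G] (φ : V → V → G) : Prop :=
  ∀ u v : V, φ u v = (φ v u)⁻¹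

/-- The coboundary `d₁φ(u,v,w) = φ(u,v)φ(v,w)φ(w,u)`. -/
def d1 (φ : V → V → G) (u v w : V) : G := φ u v * φ v w * φ w u

/-- `φ ∈ Z¹(X;G)`: a cochain all of whose triangle equations hold. -/
def IsCocycle (X : SComplex V) (φ : V → V → G) : Prop :=
  IsCochain G φ ∧ ∀ u v w : V, ({u, v, w} : Finset V) ∈ X.simps 2 → d1 φ u v w = 1

open Classical in
/-- The norm `‖φ‖`: total weight of the support of `φ`. -/
noncomputable def norm1 (X : SComplex V) (φ : V → V → G) : ℝ :=
  ∑ e ∈ (X.simps 1).filter (fun e => ∃ u v : V, e = {u, v} ∧ φ u v ≠ 1), X.weight e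

open Classical in
/-- The norm `‖d₁φ‖`: total weight of the 2-simplices whose equation is violated. -/
noncomputable def normD1 (X : SComplex V) (φ : V → V → G) : ℝ :=
  ∑ τ ∈ (X.simps 2).filter (fun τ => ∃ u v w : V, τ = {u, v, w} ∧ d1 φ u v w ≠ 1), X.weight τ

/-- `dist(φ,ψ) = ‖φψ⁻¹‖`. -/
noncomputable def dist1 (X : SComplex V) (φ ψ : V → V → G) : ℝ :=
  norm1 X (fun u v => φ u v * (ψ u v)⁻¹)

/-- The cosystolic norm `‖φ‖_csy`: the distance from `φ` to `Z¹(X;G)`. -/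
noncomputable def csyNorm (X : SComplex V) (φ : V → V → G) : ℝ :=
  sInf {d : ℝ | ∃ ψ : V → V → G, IsCocycle X ψ ∧ d = dist1 X φ ψ}

/-- The cosystolic expansion `h₁(X;G)`. -/
noncomputable def h1 (X : SComplex V) (G : Type*) [Group G] : ℝ :=
  sInf {r : ℝ | ∃ φ : V → V → G, IsCochain G φ ∧ ¬ IsCocycle X φ ∧
    r = normD1 X φ / csyNorm X φ}

end Cochains

section Fix

variable (G : Type*) [Group G] (S : Type*) [Fintype S] [MulAction G S]

open Classical in
/-- `fix(g) = |{s ∈ S : g•s = s}|`. -/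
noncomputable def fixCard (g : G) : ℕ :=
  (Finset.univ.filter fun s : S => g • s = s).card

/-- `Fix_G(S) = max_{g ≠ 1} fix(g)`. -/
noncomputable def FixG : ℕ :=
  sSup {k : ℕ | ∃ g : G, g ≠ 1 ∧ fixCard G S g = k}

end Fix
section Ycomplex

variable {G : Type*} [Group G] {S : Type*} [Fintype S] [DecidableEq S] [MulAction G S]
variable [Fintype V]

open Classical in
/-- The complex `Y_φ` associated to a cochain `φ`, together with the projection
`Prod.fst : Y_φ → X`. -/
noncomputable def Ycomplex (X : SComplex V) (φ : V → V → G) (S : Type*)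
    [Fintype S] [DecidableEq S] [MulAction G S] : SComplex (V × S) where
  faces := Finset.univ.filter fun σ : Finset (V × S) =>
    σ.image Prod.fst ∈ X.faces ∧ (σ.image Prod.fst).card = σ.card ∧
    ∀ p ∈ σ, ∀ q ∈ σ, p.1 ≠ q.1 → p.2 = φ p.1 q.1 • q.2
  nonempty_of_mem := by
    intro σ hσ
    rw [Finset.mem_filter] at hσ
    exact Finset.image_nonempty.mp (X.nonempty_of_mem _ hσ.2.1)
  down_closed := by
    intro σ hσ τ hτσ hτ
    rw [Finset.mem_filter] at hσ ⊢
    obtain ⟨-, h1, h2, h3⟩ := hσ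
    refine ⟨Finset.mem_univ _,
      X.down_closed _ h1 _ (Finset.image_subset_image hτσ) (Finset.image_nonempty.mpr hτ),
      ?_, fun p hp q hq => h3 p (hτσ hp) q (hτσ hq)⟩
    exact Finset.card_image_iff.mpr ((Finset.card_image_iff.mp h2).mono hτσ)

end Ycomplex

section Deficiency

variable {W : Type*} [DecidableEq W] [Fintype W] [Fintype V]

open Classical in
/-- `D_f(ut)`: the edges in the link of `f(ut)` that are not covered by the image of the
link of `ut`. -/
noncomputable def Dset (Y : SComplex W) (X : SComplex V) (f : W → V) (ut : W) :
    Finset (Finset V) :=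
  ((X.lk {f ut}).simps 1).filter fun e => ¬ ∃ η ∈ (Y.lk {ut}).faces, η.image f = e

/-- The local deficiency `μ_f(ut)`. -/
noncomputable def locDef (Y : SComplex W) (X : SComplex V) (f : W → V) (ut : W) : ℝ :=
  ∑ e ∈ Dset Y X f ut, (X.lk {f ut}).weight e

open Classical in
/-- The deficiency `m_f(Y)` of a map `f : Y → X`. -/
noncomputable def deficiency (Y : SComplex W) (X : SComplex V) (f : W → V) : ℝ :=
  ∑ u ∈ X.verts, (X.weight {u} / ((Y.verts.filter fun w => f w = u).card : ℝ)) *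
    ∑ ut ∈ Y.verts.filter (fun w => f w = u), locDef Y X f ut

end Deficiency
section MapOver

variable [Fintype V]

/-- An element of `M(X;G,S)`: a surjective simplicial `|S|`-to-`1` map onto `X` whose
vertex fibers are identified with `S` and whose edge fibers are matchings given by the
action of elements of `G`. -/
structure MapOver (X : SComplex V) (G : Type*) (S : Type*) [Group G] [Fintype S]
    [DecidableEq S] [MulAction G S] [Fintype V] where
  Y : SComplex (V × S)
  simplicial : ∀ τ ∈ Y.faces, τ.image Prod.fst ∈ X.faces
  injOnFaces : ∀ τ ∈ Y.faces, (τ.image Prod.fst).card = τ.card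
  surj : ∀ σ ∈ X.faces, ∃ τ ∈ Y.faces, τ.image Prod.fst = σ
  fiber : ∀ p : V × S, ({p} : Finset (V × S)) ∈ Y.faces ↔ ({p.1} : Finset V) ∈ X.faces
  edges : ∀ u v : V, ({u, v} : Finset V) ∈ X.simps 1 → ∃ g : G,
    ∀ s t : S, (({(u, s), (v, t)} : Finset (V × S)) ∈ Y.faces ↔ s = g • t)

variable {G : Type*} [Group G] {S : Type*} [Fintype S] [DecidableEq S] [MulAction G S]

open Classical in
/-- The set of edges of `Y` lying over a given edge of the base. -/
noncomputable def edgeFiber (Y : SComplex (V × S)) (e : Finset V) :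
    Finset (Finset (V × S)) :=
  (Y.simps 1).filter fun e' => e'.image Prod.fst = e

open Classical in
/-- The distance between two elements of `M(X;G,S)`: the weight of the set of edges of
`X` over which the two edge fibers differ. -/
noncomputable def mdist (X : SComplex V) (M₁ M₂ : MapOver X G S) : ℝ :=
  ∑ e ∈ (X.simps 1).filter (fun e => edgeFiber M₁.Y e ≠ edgeFiber M₂.Y e), X.weight e

/-- The distance from an element of `M(X;G,S)` to the set `M₀(X;G,S)` of genuine covers. -/
noncomputable def distToCovers (X : SComplex V) (M : MapOver X G S) : ℝ :=
  sInf {d : ℝ | ∃ M' : MapOver X G S, deficiency M'.Y X Prod.fst = 0 ∧ d = mdist X M M'}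

/-- The `(G,S)`-cover-stability `c(X;G,S)`. -/
noncomputable def coverStability (X : SComplex V) (G : Type*) (S : Type*) [Group G]
    [Fintype S] [DecidableEq S] [MulAction G S] : ℝ :=
  sInf {r : ℝ | ∃ M : MapOver X G S, deficiency M.Y X Prod.fst ≠ 0 ∧
    r = deficiency M.Y X Prod.fst / distToCovers X M}

end MapOver
section Paths

/-- A (possibly closed) edge path in a complex: consecutive vertices span edges. -/
def IsEdgePath (K : SComplex V) (p : List V) : Prop :=
  (∀ v ∈ p, ({v} : Finset V) ∈ K.faces) ∧
    p.Chain' fun u v => ({u, v} : Finset V) ∈ K.faces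

/-- Combinatorial homotopy of edge paths, generated by erasing repetitions and by
collapsing across simplices. -/
inductive Homotopic (K : SComplex V) : List V → List V → Prop
  | refl (p : List V) : Homotopic K p p
  | symm {p q : List V} : Homotopic K p q → Homotopic K q p
  | trans {p q r : List V} : Homotopic K p q → Homotopic K q r → Homotopic K p r
  | collapse (p q : List V) (a b c : V) (h : ({a, b, c} : Finset V) ∈ K.faces) :
      Homotopic K (p ++ a :: b :: c :: q) (p ++ a :: c :: q)
  | dedup (p q : List V) (a : V) : Homotopic K (p ++ a :: a :: q) (p ++ a :: q)

/-- `K` is connected: any two vertices are joined by an edge path. -/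
def SComplexConnected (K : SComplex V) : Prop :=
  ∀ u v : V, ({u} : Finset V) ∈ K.faces → ({v} : Finset V) ∈ K.faces →
    ∃ p : List V, IsEdgePath K p ∧ p.head? = some u ∧ p.getLast? = some v

/-- `K` is simply connected: connected, and every closed edge path is null-homotopic. -/
def SimplyConnected (K : SComplex V) : Prop :=
  SComplexConnected K ∧
    ∀ (p : List V) (a : V), IsEdgePath K p → p.head? = some a → p.getLast? = some a →
      Homotopic K p [a]

end Paths

section OrderComplex

open Classical in
/-- The order complex of `L ∖ {⊥, ⊤}`: simplices are the nonempty chains avoiding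
`⊥` and `⊤`. -/
noncomputable def orderComplex (L : Type*) [Lattice L] [BoundedOrder L] [Fintype L]
    [DecidableEq L] : SComplex L where
  faces := Finset.univ.filter fun σ : Finset L =>
    σ.Nonempty ∧ (∀ x ∈ σ, x ≠ ⊥ ∧ x ≠ ⊤) ∧ ∀ x ∈ σ, ∀ y ∈ σ, x ≤ y ∨ y ≤ x
  nonempty_of_mem := fun σ hσ => (Finset.mem_filter.mp hσ).2.1
  down_closed := by
    intro σ hσ τ hτσ hτ
    rw [Finset.mem_filter] at hσ ⊢
    exact ⟨Finset.mem_univ _, hτ, fun x hx => hσ.2.2.1 x (hτσ hx),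
      fun x hx y hy => hσ.2.2.2 x (hτσ hx) y (hτσ hy)⟩

end OrderComplex
section Building

variable (F : Type*) [Field F] [Fintype F]

noncomputable instance : Fintype (Submodule F (Fin 4 → F)) := by
  have : Finite (Submodule F (Fin 4 → F)) :=
    Finite.of_injective (fun N => (N : Set (Fin 4 → F))) SetLike.coe_injective
  exact Fintype.ofFinite _

noncomputable instance : DecidableEq (Submodule F (Fin 4 → F)) := Classical.decEq _

/-- The spherical building `A₃(F_q)`: the order complex of the poset of nontrivial proper
linear subspaces of `F_q⁴`. -/
noncomputable def A3 : SComplex (Submodule F (Fin 4 → F)) :=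
  orderComplex (Submodule F (Fin 4 → F))

end Building
section FixEdge

variable {G : Type*} [Group G]

open Classical in
/-- The value `fix(d₁φ(u,v₁,v₂))` for an unordered edge `e = {v₁,v₂}` of the link of `u`
(well defined for cochains, since `fix` is invariant under inversion and conjugation). -/
noncomputable def fixEdge (S : Type*) [Fintype S] [MulAction G S] (φ : V → V → G)
    (u : V) (e : Finset V) : ℕ :=
  sSup {k : ℕ | ∃ v₁ ∈ e, ∃ v₂ ∈ e, v₁ ≠ v₂ ∧ k = fixCard G S (d1 φ u v₁ v₂)}

end FixEdge
set_option linter.unusedSectionVars false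
section Aux3

variable {G : Type*} [Group G]

lemma d1_swap_aux {φ : V → V → G} (hφ : IsCochain G φ) (u v w : V) :
    d1 φ u w v = (d1 φ u v w)⁻¹ := by
  rw [d1, d1, hφ u w, hφ w v, hφ v u]
  group

lemma d1_cyc_aux {φ : V → V → G} (u v w : V) :
    d1 φ v w u = (φ u v)⁻¹ * d1 φ u v w * φ u v := by
  simp only [d1]; group

lemma d1_swap_ne {φ : V → V → G} (hφ : IsCochain G φ) (u v w : V) :
    d1 φ u w v ≠ 1 ↔ d1 φ u v w ≠ 1 := by
  rw [d1_swap_aux hφ]; simp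

lemma d1_cyc_ne {φ : V → V → G} (u v w : V) :
    d1 φ v w u ≠ 1 ↔ d1 φ u v w ≠ 1 := by
  rw [d1_cyc_aux]
  constructor <;> intro h h1 <;> apply h
  · rw [h1]; group
  · have : d1 φ u v w = φ u v * ((φ u v)⁻¹ * d1 φ u v w * φ u v) * (φ u v)⁻¹ := by group
    rw [this, h1, mul_one, mul_inv_cancel]

/-- The rank of a pure complex. -/
lemma rank_eq_of_pure {X : SComplex V} {n : ℕ} (hpure : X.IsPureOfRank n) :
    X.rank = n := by
  obtain ⟨⟨σ₀, hσ₀⟩, hp⟩ := hpure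
  apply le_antisymm
  · apply Finset.sup_le
    intro σ hσ
    obtain ⟨τ, hτ, hsub, hcard⟩ := hp σ hσ
    calc σ.card ≤ τ.card := Finset.card_le_card hsub
      _ = n := hcard
  · obtain ⟨τ, hτ, -, hcard⟩ := hp σ₀ hσ₀
    calc n = τ.card := hcard.symm
      _ ≤ X.rank := Finset.le_sup hτ

lemma weight_nonneg (X : SComplex V) (σ : Finset V) : 0 ≤ X.weight σ := by
  unfold SComplex.weight
  positivity

lemma mem_simps_iff {X : SComplex V} {σ : Finset V} {k : ℕ} :
    σ ∈ X.simps k ↔ σ ∈ X.faces ∧ σ.card = k + 1 := Finset.mem_filter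

lemma mem_lk_iff {X : SComplex V} {σ η : Finset V} :
    η ∈ (X.lk σ).faces ↔ η ∈ X.faces ∧ η ∪ σ ∈ X.faces ∧ Disjoint η σ := by
  simp [SComplex.lk, Finset.mem_filter, and_assoc]

lemma erase_mem_lk {X : SComplex V} {u : V} {τ : Finset V} (hτ : τ ∈ X.faces)
    (huτ : u ∈ τ) (h2 : 2 ≤ τ.card) : τ.erase u ∈ (X.lk {u}).faces := by
  have hne : (τ.erase u).Nonempty := by
    rw [← Finset.card_pos, Finset.card_erase_of_mem huτ]; omega
  rw [mem_lk_iff]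
  refine ⟨X.down_closed τ hτ _ (Finset.erase_subset _ _) hne, ?_, ?_⟩
  · have : τ.erase u ∪ {u} = τ := by
      rw [Finset.union_comm, ← Finset.insert_eq, Finset.insert_erase huτ]
    rw [this]; exact hτ
  · simp [Finset.disjoint_singleton_right]

lemma lk_pure {X : SComplex V} {n : ℕ} (hpure : X.IsPureOfRank n) (hn : 3 ≤ n)
    {u : V} (hu : ({u} : Finset V) ∈ X.faces) :
    (X.lk {u}).IsPureOfRank (n - 1) := by
  constructor
  · obtain ⟨τ, hτ, hsub, hcard⟩ := hpure.2 _ hu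
    have huτ : u ∈ τ := hsub (Finset.mem_singleton_self u)
    exact ⟨τ.erase u, erase_mem_lk hτ huτ (by omega)⟩
  · intro η hη
    rw [mem_lk_iff] at hη
    obtain ⟨hη1, hη2, hη3⟩ := hη
    obtain ⟨τ, hτ, hsub, hcard⟩ := hpure.2 _ hη2
    have huτ : u ∈ τ := hsub (Finset.subset_union_right (Finset.mem_singleton_self u))
    refine ⟨τ.erase u, erase_mem_lk hτ huτ (by omega), ?_, ?_⟩
    · intro x hx
      rw [Finset.mem_erase]
      refine ⟨?_, hsub (Finset.subset_union_left hx)⟩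
      rintro rfl
      exact (Finset.disjoint_singleton_right.mp hη3) hx
    · rw [Finset.card_erase_of_mem huτ, hcard]

/-- The main bijection: top faces of the link of `u` containing `e` correspond to
top faces of `X` containing `insert u e`. -/
lemma card_filter_link {X : SComplex V} {n : ℕ} (hn : 3 ≤ n)
    {u : V} {e : Finset V} (hue : u ∉ e) :
    (((X.lk {u}).simps (n - 2)).filter (fun η => e ⊆ η)).card
      = ((X.simps (n - 1)).filter (fun τ => insert u e ⊆ τ)).card := by
  apply Finset.card_bij (fun η _ => insert u η)
  · intro η hη
    simp only [Finset.mem_filter, mem_simps_iff] at hη ⊢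
    obtain ⟨⟨hη1, hη2⟩, hη3⟩ := hη
    rw [mem_lk_iff] at hη1
    have huη : u ∉ η := Finset.disjoint_singleton_right.mp hη1.2.2
    have hins : insert u η = η ∪ {u} := by
      rw [Finset.union_comm, Finset.insert_eq]
    refine ⟨⟨?_, ?_⟩, ?_⟩
    · rw [hins]; exact hη1.2.1
    · rw [Finset.card_insert_of_notMem huη, hη2]; omega
    · exact Finset.insert_subset_insert _ hη3
  · intro η1 hη1 η2 hη2 h
    have h1 : u ∉ η1 := by
      rw [Finset.mem_filter, mem_simps_iff, mem_lk_iff] at hη1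
      exact Finset.disjoint_singleton_right.mp hη1.1.1.2.2
    have h2 : u ∉ η2 := by
      rw [Finset.mem_filter, mem_simps_iff, mem_lk_iff] at hη2
      exact Finset.disjoint_singleton_right.mp hη2.1.1.2.2
    rw [← Finset.erase_insert h1, ← Finset.erase_insert h2, h]
  · intro τ hτ
    simp only [Finset.mem_filter, mem_simps_iff] at hτ
    obtain ⟨⟨hτ1, hτ2⟩, hτ3⟩ := hτ
    have huτ : u ∈ τ := hτ3 (Finset.mem_insert_self u e)
    refine ⟨τ.erase u, ?_, Finset.insert_erase huτ⟩
    simp only [Finset.mem_filter, mem_simps_iff]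
    refine ⟨⟨erase_mem_lk hτ1 huτ (by omega), ?_⟩, ?_⟩
    · rw [Finset.card_erase_of_mem huτ, hτ2]; omega
    · intro x hx
      rw [Finset.mem_erase]
      exact ⟨fun h => hue (h ▸ hx), hτ3 (Finset.mem_insert_of_mem hx)⟩

lemma deg_pos {X : SComplex V} {n : ℕ} (hpure : X.IsPureOfRank n) (hn : 3 ≤ n)
    {σ : Finset V} (hσ : σ ∈ X.faces) :
    0 < ((X.simps (n - 1)).filter (fun τ => σ ⊆ τ)).card := by
  obtain ⟨τ, hτ, hsub, hcard⟩ := hpure.2 _ hσ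
  rw [Finset.card_pos]
  exact ⟨τ, Finset.mem_filter.mpr ⟨mem_simps_iff.mpr ⟨hτ, by omega⟩, hsub⟩⟩

/-- The key weight identity: `c_X(u)·c_{lk(X,u)}(e) = c_X({u}∪e)/3`. -/
lemma weight_mul_weight_lk {X : SComplex V} {n : ℕ} (hpure : X.IsPureOfRank n)
    (hn : 3 ≤ n) {u : V} (hu : ({u} : Finset V) ∈ X.faces)
    {e : Finset V} (he : e ∈ (X.lk {u}).simps 1) :
    X.weight {u} * (X.lk {u}).weight e = X.weight (insert u e) / 3 := by
  rw [mem_simps_iff] at he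
  obtain ⟨he1, he2⟩ := he
  rw [mem_lk_iff] at he1
  have hue : u ∉ e := Finset.disjoint_singleton_right.mp he1.2.2
  have hXr : X.rank = n := rank_eq_of_pure hpure
  have hlkr : (X.lk {u}).rank = n - 1 := rank_eq_of_pure (lk_pure hpure hn hu)
  have hcard3 : (insert u e).card = 3 := by
    rw [Finset.card_insert_of_notMem hue, he2]
  have h11 : n - 1 - 1 = n - 2 := by omega
  -- denominator of the link weight: number of top faces of the link
  have hden : ((X.lk {u}).simps (n - 2)).card
      = ((X.simps (n - 1)).filter (fun τ => ({u} : Finset V) ⊆ τ)).card := by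
    have := card_filter_link (X := X) hn (u := u) (e := ∅) (Finset.notMem_empty u)
    simpa using this
  unfold SComplex.weight
  rw [hXr, hlkr, h11, card_filter_link hn hue, hden, he2, hcard3,
    Finset.card_singleton]
  set N := (X.simps (n - 1)).card with hN
  set Du := ((X.simps (n - 1)).filter (fun τ => ({u} : Finset V) ⊆ τ)).card with hDu
  set Dt := ((X.simps (n - 1)).filter (fun τ => insert u e ⊆ τ)).card with hDt
  have hDupos : 0 < Du := deg_pos hpure hn hu
  have hNpos : 0 < N := lt_of_lt_of_le hDupos (Finset.card_le_card (Finset.filter_subset _ _))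
  have hch : 3 * n.choose 3 = n * (n - 1).choose 2 := by
    have h := Nat.add_one_mul_choose_eq (n - 1) 2
    rw [Nat.sub_add_cancel (by omega)] at h
    norm_num at h
    omega
  have hch2 : 0 < (n - 1).choose 2 := Nat.choose_pos (by omega)
  have hch3 : 0 < n.choose 3 := Nat.choose_pos (by omega)
  have hn1 : (n.choose 1) = n := Nat.choose_one_right n
  rw [hn1]
  have hcast : (n : ℝ) * ((n - 1).choose 2 : ℝ) = 3 * (n.choose 3 : ℝ) := by
    exact_mod_cast hch.symm
  have pn : (0:ℝ) < (n:ℝ) := by exact_mod_cast (by omega : 0 < n)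
  have pN : (0:ℝ) < (N:ℝ) := by exact_mod_cast hNpos
  have pDu : (0:ℝ) < (Du:ℝ) := by exact_mod_cast hDupos
  have pc2 : (0:ℝ) < (((n-1).choose 2 : ℕ):ℝ) := by exact_mod_cast hch2
  have pc3 : (0:ℝ) < ((n.choose 3 : ℕ):ℝ) := by exact_mod_cast hch3
  rw [div_mul_div_comm, div_div,
    div_eq_div_iff (mul_pos (mul_pos pn pN) (mul_pos pc2 pDu)).ne'
      (mul_pos (mul_pos pc3 pN) (by norm_num : (0:ℝ) < 3)).ne']
  linear_combination (-((Dt:ℝ) * (Du:ℝ) * (N:ℝ))) * hcast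

lemma card_pair_le (x y : V) : ({x, y} : Finset V).card ≤ 2 :=
  (Finset.card_insert_le _ _).trans (by simp)

lemma distinct_of_card_three {a b c : V} (h : ({a, b, c} : Finset V).card = 3) :
    a ≠ b ∧ a ≠ c ∧ b ≠ c := by
  refine ⟨?_, ?_, ?_⟩ <;> rintro rfl
  · have hsub : ({a, a, c} : Finset V) ⊆ {a, c} := by
      intro x hx; simp only [Finset.mem_insert, Finset.mem_singleton] at hx ⊢; tauto
    have := (Finset.card_le_card hsub).trans (card_pair_le a c); omega
  · have hsub : ({a, b, a} : Finset V) ⊆ {a, b} := by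
      intro x hx; simp only [Finset.mem_insert, Finset.mem_singleton] at hx ⊢; tauto
    have := (Finset.card_le_card hsub).trans (card_pair_le a b); omega
  · have hsub : ({a, b, b} : Finset V) ⊆ {a, b} := by
      intro x hx; simp only [Finset.mem_insert, Finset.mem_singleton] at hx ⊢; tauto
    have := (Finset.card_le_card hsub).trans (card_pair_le a b); omega

/-- Transporting the bad-triangle witness to any chosen vertex of the triangle. -/
lemma bad_erase {φ : V → V → G} {τ : Finset V} (hcard : τ.card = 3) {u : V}
    (hu : u ∈ τ) (h : ∃ a b c, τ = ({a, b, c} : Finset V) ∧ d1 φ a b c ≠ 1) :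
    ∃ v w, τ.erase u = ({v, w} : Finset V) ∧ d1 φ u v w ≠ 1 := by
  obtain ⟨a, b, c, hτ, hd⟩ := h
  obtain ⟨hab, hac, hbc⟩ := distinct_of_card_three (hτ ▸ hcard)
  rw [hτ] at hu
  simp only [Finset.mem_insert, Finset.mem_singleton] at hu
  rcases hu with rfl | rfl | rfl
  · refine ⟨b, c, ?_, hd⟩
    rw [hτ]
    exact Finset.erase_insert (by simp [hab, hac])
  · refine ⟨c, a, ?_, (d1_cyc_ne a u c).mpr hd⟩
    rw [hτ]
    ext x
    simp only [Finset.mem_erase, Finset.mem_insert, Finset.mem_singleton]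
    constructor
    · rintro ⟨hx, rfl | rfl | rfl⟩
      exacts [Or.inr rfl, absurd rfl hx, Or.inl rfl]
    · rintro (rfl | rfl)
      exacts [⟨Ne.symm hbc, Or.inr (Or.inr rfl)⟩, ⟨hab, Or.inl rfl⟩]
  · refine ⟨a, b, ?_, (d1_cyc_ne b u a).mpr ((d1_cyc_ne a b u).mpr hd)⟩
    rw [hτ]
    ext x
    simp only [Finset.mem_erase, Finset.mem_insert, Finset.mem_singleton]
    constructor
    · rintro ⟨hx, rfl | rfl | rfl⟩
      exacts [Or.inl rfl, Or.inr rfl, absurd rfl hx]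
    · rintro (rfl | rfl)
      exacts [⟨hac, Or.inl rfl⟩, ⟨hbc, Or.inr (Or.inl rfl)⟩]

end Aux3

section Aux4
set_option linter.unusedSectionVars false

variable {V : Type*} [Fintype V] [DecidableEq V] {G : Type*} [Group G]
  {S : Type*} [Fintype S] [DecidableEq S] [MulAction G S]

lemma mem_Yfaces_iff {X : SComplex V} {φ : V → V → G} {σ : Finset (V × S)} :
    σ ∈ (Ycomplex X φ S).faces ↔ σ.image Prod.fst ∈ X.faces ∧
      (σ.image Prod.fst).card = σ.card ∧
      ∀ p ∈ σ, ∀ q ∈ σ, p.1 ≠ q.1 → p.2 = φ p.1 q.1 • q.2 := by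
  unfold Ycomplex
  simp only [Finset.mem_filter, Finset.mem_univ, true_and]

lemma singleton_mem_Yfaces {X : SComplex V} {φ : V → V → G} (u : V) (s : S) :
    ({(u, s)} : Finset (V × S)) ∈ (Ycomplex X φ S).faces ↔ ({u} : Finset V) ∈ X.faces := by
  rw [mem_Yfaces_iff]
  simp

lemma Yverts_filter {X : SComplex V} {φ : V → V → G} {u : V}
    (hu : ({u} : Finset V) ∈ X.faces) :
    ((Ycomplex X φ S).verts.filter (fun w => Prod.fst w = u))
      = {u} ×ˢ (Finset.univ : Finset S) := by
  ext ⟨v, s⟩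
  simp only [Finset.mem_filter, SComplex.verts, Finset.mem_univ, true_and,
    Finset.mem_product, Finset.mem_singleton, singleton_mem_Yfaces]
  constructor
  · rintro ⟨-, rfl⟩; exact ⟨rfl, trivial⟩
  · rintro ⟨rfl, -⟩; exact ⟨hu, rfl⟩

/-- If the triangle equation at `u,v,w` holds, the edge `{v,w}` of the link of `u` is
covered from `(u,s)` in `Y_φ`. -/
lemma covered_of_d1_eq_one {X : SComplex V} {φ : V → V → G} (hφ : IsCochain G φ)
    {u v w : V} (hvw : v ≠ w) (huv : u ≠ v) (huw : u ≠ w)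
    (hface : ({v, w} : Finset V) ∪ {u} ∈ X.faces) (s : S)
    (h1 : d1 φ u v w = 1) :
    ∃ η ∈ ((Ycomplex X φ S).lk {(u, s)}).faces, η.image Prod.fst = ({v, w} : Finset V) := by
  set t : S := φ v u • s with ht
  set r : S := φ w u • s with hr
  have key : φ v w * φ w u = φ v u := by
    have : φ u v * (φ v w * φ w u) = 1 := by rw [← mul_assoc]; exact h1
    have h2 := congrArg (fun g => φ v u * g) this
    simpa [hφ u v, mul_assoc] using h2
  have e1 : φ v w • r = t := by rw [hr, ht, smul_smul, key]
  have e2 : φ w v • t = r := by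
    rw [← e1, smul_smul, hφ w v, inv_mul_cancel, one_smul]
  have e3 : φ u v • t = s := by rw [ht, smul_smul, hφ u v, inv_mul_cancel, one_smul]
  have e4 : φ u w • r = s := by rw [hr, smul_smul, hφ u w, inv_mul_cancel, one_smul]
  refine ⟨{(v, t), (w, r)}, ?_, ?_⟩
  · rw [mem_lk_iff]
    have himg : ({(v, t), (w, r)} : Finset (V × S)).image Prod.fst = {v, w} := by
      simp [Finset.image_insert]
    have himg3 : (({(v, t), (w, r)} : Finset (V × S)) ∪ {(u, s)}).image Prod.fst
        = ({v, w} : Finset V) ∪ {u} := by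
      rw [Finset.image_union, himg]; simp
    have hcard2 : ({(v, t), (w, r)} : Finset (V × S)).card = 2 := by
      rw [Finset.card_insert_of_notMem (by simp [hvw]), Finset.card_singleton]
    have hcardv2 : ({v, w} : Finset V).card = 2 := by
      rw [Finset.card_insert_of_notMem (by simp [hvw]), Finset.card_singleton]
    have hXface : ({v, w} : Finset V) ∈ X.faces :=
      X.down_closed _ hface _ Finset.subset_union_left ⟨v, by simp⟩
    refine ⟨?_, ?_, ?_⟩
    · rw [mem_Yfaces_iff, himg]
      refine ⟨hXface, by rw [hcardv2, hcard2], ?_⟩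
      intro p hp q hq hne
      simp only [Finset.mem_insert, Finset.mem_singleton] at hp hq
      rcases hp with rfl | rfl <;> rcases hq with rfl | rfl
      · exact absurd rfl hne
      · exact e1.symm
      · exact e2.symm
      · exact absurd rfl hne
    · rw [mem_Yfaces_iff, himg3]
      have hcardv3 : (({v, w} : Finset V) ∪ {u}).card = 3 := by
        rw [Finset.union_comm, ← Finset.insert_eq,
          Finset.card_insert_of_notMem (by simp [huv, huw]), hcardv2]
      have hcard3 : (({(v, t), (w, r)} : Finset (V × S)) ∪ {(u, s)}).card = 3 := by
        rw [Finset.union_comm, ← Finset.insert_eq,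
          Finset.card_insert_of_notMem (by simp [huv, huw]), hcard2]
      refine ⟨hface, by rw [hcardv3, hcard3], ?_⟩
      intro p hp q hq hne
      simp only [Finset.mem_union, Finset.mem_insert, Finset.mem_singleton] at hp hq
      rcases hp with (rfl | rfl) | rfl <;> rcases hq with (rfl | rfl) | rfl
      · exact absurd rfl hne
      · exact e1.symm
      · exact rfl
      · exact e2.symm
      · exact absurd rfl hne
      · exact rfl
      · exact e3.symm
      · exact e4.symm
      · exact absurd rfl hne
    · simp only [Finset.disjoint_singleton_right, Finset.mem_insert, Finset.mem_singleton,
        Prod.mk.injEq, not_or]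
      exact ⟨fun h => absurd h.1 huv, fun h => absurd h.1 huw⟩
  · simp [Finset.image_insert]

open Classical in
lemma Dset_subset_bad {X : SComplex V} {φ : V → V → G} (hφ : IsCochain G φ)
    {u : V} (s : S) :
    Dset (Ycomplex X φ S) X Prod.fst (u, s) ⊆
      ((X.lk {u}).simps 1).filter (fun e => ∃ v w, e = ({v, w} : Finset V) ∧ d1 φ u v w ≠ 1) := by
  intro e he
  unfold Dset at he
  rw [Finset.mem_filter] at he
  obtain ⟨he1, he2⟩ := he
  have he1' : e ∈ (X.lk {u}).simps 1 := he1
  rw [Finset.mem_filter]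
  refine ⟨he1', ?_⟩
  have hcard : e.card = 2 := (mem_simps_iff.mp he1').2
  obtain ⟨v, w, hvw, rfl⟩ := Finset.card_eq_two.mp hcard
  refine ⟨v, w, rfl, ?_⟩
  intro h1
  apply he2
  have hlk := (mem_simps_iff.mp he1').1
  rw [mem_lk_iff] at hlk
  have hue : u ∉ ({v, w} : Finset V) := Finset.disjoint_singleton_right.mp hlk.2.2
  have huv : u ≠ v := by rintro rfl; exact hue (by simp)
  have huw : u ≠ w := by rintro rfl; exact hue (by simp)
  exact covered_of_d1_eq_one hφ hvw huv huw hlk.2.1 s h1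

end Aux4

/-- the deficiency of `Y_φ` is at most `‖d₁φ‖`. -/
theorem deficiency_le_normD1
    {V : Type*} [Fintype V] [DecidableEq V]
    {G : Type*} [Group G] {S : Type*} [Fintype S] [DecidableEq S] [Nonempty S]
    [MulAction G S]
    (X : SComplex V) (n : ℕ) (hn : 3 ≤ n) (hpure : X.IsPureOfRank n)
    (φ : V → V → G) (hφ : IsCochain G φ) :
    deficiency (Ycomplex X φ S) X Prod.fst ≤ normD1 X φ := by
  classical
  -- the bad edges in the link of `u`, and their total link-weight
  set Bfin : V → Finset (Finset V) := fun u =>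
    ((X.lk {u}).simps 1).filter (fun e => ∃ v w, e = ({v, w} : Finset V) ∧ d1 φ u v w ≠ 1)
    with hBfin
  set T : V → ℝ := fun u => ∑ e ∈ Bfin u, (X.lk {u}).weight e with hT
  -- the bad triangles
  set BT : Finset (Finset V) :=
    (X.simps 2).filter (fun τ => ∃ u v w, τ = ({u, v, w} : Finset V) ∧ d1 φ u v w ≠ 1)
    with hBT
  have hvert : ∀ u ∈ X.verts, ({u} : Finset V) ∈ X.faces := by
    intro u hu
    simpa [SComplex.verts, Finset.mem_filter] using hu
  have step1 : deficiency (Ycomplex X φ S) X Prod.fst ≤ ∑ u ∈ X.verts, X.weight {u} * T u := by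
    unfold deficiency
    apply Finset.sum_le_sum
    intro u hu
    have hu' := hvert u hu
    rw [Yverts_filter (φ := φ) hu']
    have hc : ((({u} : Finset V) ×ˢ (Finset.univ : Finset S)).card : ℝ)
        = (Fintype.card S : ℝ) := by simp
    have hcne : ((Fintype.card S : ℕ) : ℝ) ≠ 0 :=
      Nat.cast_ne_zero.mpr Fintype.card_ne_zero
    have hT0 : 0 ≤ T u := Finset.sum_nonneg fun e _ => weight_nonneg _ _
    have hloc : ∀ ut ∈ ({u} : Finset V) ×ˢ (Finset.univ : Finset S),
        locDef (Ycomplex X φ S) X Prod.fst ut ≤ T u := by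
      rintro ⟨u', s⟩ hmem
      rw [Finset.mem_product, Finset.mem_singleton] at hmem
      obtain ⟨rfl, -⟩ := hmem
      unfold locDef
      exact Finset.sum_le_sum_of_subset_of_nonneg (Dset_subset_bad hφ s)
        (fun e _ _ => weight_nonneg _ _)
    have hsum : ∑ ut ∈ ({u} : Finset V) ×ˢ (Finset.univ : Finset S),
        locDef (Ycomplex X φ S) X Prod.fst ut ≤ (Fintype.card S : ℝ) * T u := by
      calc ∑ ut ∈ ({u} : Finset V) ×ˢ (Finset.univ : Finset S),
            locDef (Ycomplex X φ S) X Prod.fst ut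
          ≤ ∑ _ut ∈ ({u} : Finset V) ×ˢ (Finset.univ : Finset S), T u :=
            Finset.sum_le_sum hloc
        _ = (Fintype.card S : ℝ) * T u := by
            rw [Finset.sum_const, nsmul_eq_mul]
            simp
    calc X.weight {u} / ((({u} : Finset V) ×ˢ (Finset.univ : Finset S)).card : ℝ) *
          ∑ ut ∈ ({u} : Finset V) ×ˢ (Finset.univ : Finset S),
            locDef (Ycomplex X φ S) X Prod.fst ut
        ≤ X.weight {u} / ((({u} : Finset V) ×ˢ (Finset.univ : Finset S)).card : ℝ) *
            ((Fintype.card S : ℝ) * T u) := by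
          apply mul_le_mul_of_nonneg_left hsum
          exact div_nonneg (weight_nonneg _ _) (Nat.cast_nonneg _)
      _ = X.weight {u} * T u := by
          rw [hc]
          field_simp
  have step2 : ∑ u ∈ X.verts, X.weight {u} * T u = ∑ τ ∈ BT, X.weight τ := by
    have hw : ∀ u ∈ X.verts, X.weight {u} * T u
        = ∑ e ∈ Bfin u, X.weight (insert u e) / 3 := by
      intro u hu
      rw [hT, Finset.mul_sum]
      exact Finset.sum_congr rfl fun e he =>
        weight_mul_weight_lk hpure hn (hvert u hu) (Finset.mem_filter.mp he).1
    rw [Finset.sum_congr rfl hw, Finset.sum_sigma' X.verts Bfin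
      (fun u e => X.weight (insert u e) / 3)]
    have hmain : ∑ x ∈ X.verts.sigma Bfin, X.weight (insert x.1 x.2) / 3
        = ∑ x ∈ BT.sigma (fun τ => τ), X.weight x.1 / 3 := by
      apply Finset.sum_nbij' (fun x => (⟨insert x.1 x.2, x.1⟩ : Σ _ : Finset V, V))
        (fun x => (⟨x.2, x.1.erase x.2⟩ : Σ _ : V, Finset V))
      · rintro ⟨u, e⟩ hx
        rw [Finset.mem_sigma] at hx
        obtain ⟨hu, he⟩ := hx
        rw [hBfin, Finset.mem_filter] at he
        obtain ⟨he1, v, w, rfl, hd⟩ := he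
        rw [mem_simps_iff] at he1
        obtain ⟨he1, hecard⟩ := he1
        rw [mem_lk_iff] at he1
        have hue : u ∉ ({v, w} : Finset V) :=
          Finset.disjoint_singleton_right.mp he1.2.2
        rw [Finset.mem_sigma]
        constructor
        · rw [hBT, Finset.mem_filter, mem_simps_iff]
          refine ⟨⟨?_, ?_⟩, u, v, w, rfl, hd⟩
          · rw [Finset.insert_eq, Finset.union_comm]
            exact he1.2.1
          · rw [Finset.card_insert_of_notMem hue, hecard]
        · exact Finset.mem_insert_self _ _
      · rintro ⟨τ, u⟩ hx
        rw [Finset.mem_sigma] at hx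
        obtain ⟨hτ, hu⟩ := hx
        rw [hBT, Finset.mem_filter, mem_simps_iff] at hτ
        obtain ⟨⟨hτ1, hτ2⟩, hbad⟩ := hτ
        rw [Finset.mem_sigma]
        constructor
        · simp only [SComplex.verts, Finset.mem_filter, Finset.mem_univ, true_and]
          exact X.down_closed τ hτ1 {u} (Finset.singleton_subset_iff.mpr hu)
            (Finset.singleton_nonempty u)
        · rw [hBfin, Finset.mem_filter, mem_simps_iff]
          refine ⟨⟨erase_mem_lk hτ1 hu (by omega), ?_⟩, bad_erase hτ2 hu hbad⟩
          rw [Finset.card_erase_of_mem hu, hτ2]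
      · rintro ⟨u, e⟩ hx
        rw [Finset.mem_sigma] at hx
        obtain ⟨-, he⟩ := hx
        rw [hBfin, Finset.mem_filter, mem_simps_iff, mem_lk_iff] at he
        have hue : u ∉ e := Finset.disjoint_singleton_right.mp he.1.1.2.2
        simp only [Finset.erase_insert hue]
      · rintro ⟨τ, u⟩ hx
        rw [Finset.mem_sigma] at hx
        simp only [Finset.insert_erase hx.2]
      · rintro ⟨u, e⟩ -
        rfl
    rw [hmain, Finset.sum_sigma]
    apply Finset.sum_congr rfl
    intro τ hτ
    rw [hBT, Finset.mem_filter, mem_simps_iff] at hτ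
    show (∑ _s ∈ τ, X.weight τ / 3) = X.weight τ
    rw [Finset.sum_const, hτ.1.2, nsmul_eq_mul]
    push_cast
    ring
  have step3 : normD1 X φ = ∑ τ ∈ BT, X.weight τ := by
    unfold normD1
    rw [hBT]
    congr
  calc deficiency (Ycomplex X φ S) X Prod.fst
      ≤ ∑ u ∈ X.verts, X.weight {u} * T u := step1
    _ = ∑ τ ∈ BT, X.weight τ := step2
    _ = normD1 X φ := step3.symm
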